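/- arXiv:math/0101245 — 2 statements merged into one kernel-verified Lean document; each statement's English description precedes it below -/
import Mathlib

section
/- Suppose the eleven known blocks a, b, c, d, e, f, g, h, i, j, k are invertible and that A·B = I and B·A = I. Then y = c⁻¹·k⁻¹·j·a·f + c⁻¹·k⁻¹·j·b·k + c⁻¹·k⁻¹·z·d·f + c⁻¹·k⁻¹·z·e·k. -/
open Matrix

/-- The 3×3 block matrix `[[m11, m12, m13], [m21, m22, m23], [m31, m32, m33]]`
assembled from n×n blocks. -/
def blk3 {F : Type*} [Field F] {n : ℕ}
    (m11 m12 m13 m21 m22 m23 m31 m32 m33 : Matrix (Fin n) (Fin n) F) :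
    Matrix (Fin n ⊕ (Fin n ⊕ Fin n)) (Fin n ⊕ (Fin n ⊕ Fin n)) F :=
  Matrix.fromBlocks m11 (Matrix.fromCols m12 m13) (Matrix.fromRows m21 m31)
    (Matrix.fromBlocks m22 m23 m32 m33)

lemma fromCols_add' {F : Type*} [Field F] {n : ℕ}
    (A B : Matrix (Fin n) (Fin n) F) (C D : Matrix (Fin n) (Fin n) F) :
    fromCols A B + fromCols C D = fromCols (A + C) (B + D) := by
  ext _ (_|_) <;> simp [Matrix.fromCols]

lemma fromRows_add' {F : Type*} [Field F] {n : ℕ}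
    (A B : Matrix (Fin n) (Fin n) F) (C D : Matrix (Fin n) (Fin n) F) :
    fromRows A B + fromRows C D = fromRows (A + C) (B + D) := by
  ext (_|_) _ <;> simp [fromRows_apply_inl, fromRows_apply_inr]

lemma blk3_mul {F : Type*} [Field F] {n : ℕ}
    (a t b u c v d w e x f g h y i j k z : Matrix (Fin n) (Fin n) F) :
    blk3 a t b u c v d w e * blk3 x f g h y i j k z =
      blk3 (a*x + t*h + b*j) (a*f + t*y + b*k) (a*g + t*i + b*z)
        (u*x + c*h + v*j) (u*f + c*y + v*k) (u*g + c*i + v*z)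
        (d*x + w*h + e*j) (d*f + w*y + e*k) (d*g + w*i + e*z) := by
  simp only [blk3, fromBlocks_multiply, fromCols_mul_fromRows, fromCols_mul_fromBlocks,
    fromBlocks_mul_fromRows, mul_fromCols, fromRows_mul, fromRows_mul_fromCols, add_assoc, fromCols_add', fromRows_add',
    ← Matrix.fromBlocks_add, fromCols_fromRows_eq_fromBlocks]

lemma blk3_one {F : Type*} [Field F] {n : ℕ} :
    (blk3 1 0 0 0 1 0 0 0 1 : Matrix (Fin n ⊕ (Fin n ⊕ Fin n)) _ F) = 1 := by
  simp [blk3, Matrix.fromBlocks_one]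

lemma blk3_inj {F : Type*} [Field F] {n : ℕ}
    {m11 m12 m13 m21 m22 m23 m31 m32 m33 p11 p12 p13 p21 p22 p23 p31 p32 p33 :
      Matrix (Fin n) (Fin n) F}
    (hE : blk3 m11 m12 m13 m21 m22 m23 m31 m32 m33 = blk3 p11 p12 p13 p21 p22 p23 p31 p32 p33) :
    m22 = p22 ∧ m31 = p31 ∧ m33 = p33 := by
  unfold blk3 at hE
  refine ⟨?_, ?_, ?_⟩ <;> ext r s
  · have := congrFun (congrFun hE (Sum.inr (Sum.inl r))) (Sum.inr (Sum.inl s))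
    simpa [Matrix.fromBlocks] using this
  · have := congrFun (congrFun hE (Sum.inr (Sum.inr r))) (Sum.inl s)
    simpa [Matrix.fromBlocks, fromRows_apply_inr] using this
  · have := congrFun (congrFun hE (Sum.inr (Sum.inr r))) (Sum.inr (Sum.inr s))
    simpa [Matrix.fromBlocks] using this

theorem stmt_11 {F : Type*} [Field F] {n : ℕ} (hn : 0 < n)
    (a b c d e f g h i j k : Matrix (Fin n) (Fin n) F)
    (ha : IsUnit a) (hb : IsUnit b) (hc : IsUnit c) (hd : IsUnit d) (he : IsUnit e)
    (hf : IsUnit f) (hg : IsUnit g) (hh : IsUnit h) (hi : IsUnit i) (hj : IsUnit j)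
    (hk : IsUnit k)
    (t u v w x y z : Matrix (Fin n) (Fin n) F)
    (hAB : blk3 a t b u c v d w e * blk3 x f g h y i j k z = 1)
    (hBA : blk3 x f g h y i j k z * blk3 a t b u c v d w e = 1) :
    y = c⁻¹ * k⁻¹ * j * a * f + c⁻¹ * k⁻¹ * j * b * k +
      c⁻¹ * k⁻¹ * z * d * f + c⁻¹ * k⁻¹ * z * e * k := by
  rw [blk3_mul, ← blk3_one] at hAB
  rw [blk3_mul, ← blk3_one] at hBA
  obtain ⟨h22, -, -⟩ := blk3_inj hAB
  obtain ⟨-, h31, h33⟩ := blk3_inj hBA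
  -- h22 : u*f + c*y + v*k = 1, h31 : j*a + k*u + z*d = 0, h33 : j*b + k*v + z*e = 1
  have hja : j * a = -(k * u) - z * d := by linear_combination (norm := noncomm_ring) h31
  have hjb : j * b = 1 - k * v - z * e := by linear_combination (norm := noncomm_ring) h33
  have hcy : c * y = 1 - u * f - v * k := by linear_combination (norm := noncomm_ring) h22
  have hkinv : k⁻¹ * k = 1 := Matrix.nonsing_inv_mul k (Matrix.isUnit_iff_isUnit_det k |>.mp hk)
  have hcinv : c⁻¹ * c = 1 := Matrix.nonsing_inv_mul c (Matrix.isUnit_iff_isUnit_det c |>.mp hc)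
  have hkk : ∀ m : Matrix (Fin n) (Fin n) F, k⁻¹ * (k * m) = m := fun m => by
    rw [← Matrix.mul_assoc, hkinv, Matrix.one_mul]
  have hy : y = c⁻¹ * (1 - u * f - v * k) := by
    rw [← hcy, ← Matrix.mul_assoc, hcinv, Matrix.one_mul]
  rw [hy]
  have e1 : c⁻¹ * k⁻¹ * j * a * f = c⁻¹ * (k⁻¹ * ((j * a) * f)) := by
    simp [Matrix.mul_assoc]
  have e2 : c⁻¹ * k⁻¹ * j * b * k = c⁻¹ * (k⁻¹ * ((j * b) * k)) := by
    simp [Matrix.mul_assoc]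
  rw [e1, e2, hja, hjb]
  simp only [Matrix.sub_mul, Matrix.neg_mul, Matrix.one_mul, Matrix.mul_sub, Matrix.mul_neg,
    Matrix.mul_add, Matrix.add_mul, Matrix.mul_assoc, hkk, hkinv, Matrix.mul_one]
  noncomm_ring
end

section
/- Suppose the eleven known blocks a, b, c, d, e, f, g, h, i, j, k are invertible, the outer matrix [[a, b], [d, e]] is invertible, and A·B = I and B·A = I. Then z = q̃ · (d·a⁻¹ − e·b⁻¹)⁻¹. -/
open Matrix

/-- `p̃ = −a⁻¹h⁻¹i + a⁻¹bjh⁻¹i − d⁻¹ − d⁻¹ejh⁻¹`. -/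
noncomputable def pTilde {F : Type*} [Field F] {n : ℕ}
    (a b d e h i j : Matrix (Fin n) (Fin n) F) : Matrix (Fin n) (Fin n) F :=
  -(a⁻¹ * h⁻¹ * i) + a⁻¹ * b * j * h⁻¹ * i - d⁻¹ - d⁻¹ * e * j * h⁻¹

/-- `q̃ = −kf⁻¹a⁻¹ + kf⁻¹gda⁻¹ − b⁻¹ − kf⁻¹geb⁻¹`. -/
noncomputable def qTilde {F : Type*} [Field F] {n : ℕ}
    (a b d e f g k : Matrix (Fin n) (Fin n) F) : Matrix (Fin n) (Fin n) F :=
  -(k * f⁻¹ * a⁻¹) + k * f⁻¹ * g * d * a⁻¹ - b⁻¹ - k * f⁻¹ * g * e * b⁻¹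

private lemma fromColumns_add' {R : Type*} [AddCommMonoid R] {m n₁ n₂ : Type*}
    (A₁ B₁ : Matrix m n₁ R) (A₂ B₂ : Matrix m n₂ R) :
    fromCols A₁ A₂ + fromCols B₁ B₂ = fromCols (A₁ + B₁) (A₂ + B₂) := by
  ext i (j | j) <;> simp

private lemma fromRows_add'_s13 {R : Type*} [AddCommMonoid R] {m₁ m₂ n : Type*}
    (A₁ B₁ : Matrix m₁ n R) (A₂ B₂ : Matrix m₂ n R) :
    fromRows A₁ A₂ + fromRows B₁ B₂ = fromRows (A₁ + B₁) (A₂ + B₂) := by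
  ext (i | i) j <;> simp

theorem stmt_13 {F : Type*} [Field F] {n : ℕ} (hn : 0 < n)
    (a b c d e f g h i j k : Matrix (Fin n) (Fin n) F)
    (ha : IsUnit a) (hb : IsUnit b) (hc : IsUnit c) (hd : IsUnit d) (he : IsUnit e)
    (hf : IsUnit f) (hg : IsUnit g) (hh : IsUnit h) (hi : IsUnit i) (hj : IsUnit j)
    (hk : IsUnit k)
    (t u v w x y z : Matrix (Fin n) (Fin n) F)
    (houter : IsUnit (Matrix.fromBlocks a b d e))
    (hAB : blk3 a t b u c v d w e * blk3 x f g h y i j k z = 1)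
    (hBA : blk3 x f g h y i j k z * blk3 a t b u c v d w e = 1) :
    z = qTilde a b d e f g k * (d * a⁻¹ - e * b⁻¹)⁻¹ := by
  have ha1 : a * a⁻¹ = 1 := Matrix.mul_nonsing_inv a ((Matrix.isUnit_iff_isUnit_det a).mp ha)
  have hb1 : b * b⁻¹ = 1 := Matrix.mul_nonsing_inv b ((Matrix.isUnit_iff_isUnit_det b).mp hb)
  have hb1' : b⁻¹ * b = 1 := Matrix.nonsing_inv_mul b ((Matrix.isUnit_iff_isUnit_det b).mp hb)
  have hf1 : f⁻¹ * f = 1 := Matrix.nonsing_inv_mul f ((Matrix.isUnit_iff_isUnit_det f).mp hf)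
  -- invertibility of the "inner" combination via the Schur complement
  letI : Invertible a := ha.invertible
  have hSchur : IsUnit (e - d * ⅟a * b) :=
    (Matrix.isUnit_fromBlocks_iff_of_invertible₁₁).mp houter
  rw [Matrix.invOf_eq_nonsing_inv] at hSchur
  have hSeq : d * a⁻¹ - e * b⁻¹ = -((e - d * a⁻¹ * b) * b⁻¹) := by
    rw [Matrix.sub_mul, Matrix.mul_assoc, Matrix.mul_assoc, hb1, mul_one]
    abel
  have hbinv : IsUnit (b⁻¹ : Matrix (Fin n) (Fin n) F) := (Matrix.isUnit_iff_isUnit_det _).mpr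
    (Matrix.isUnit_nonsing_inv_det b ((Matrix.isUnit_iff_isUnit_det b).mp hb))
  have hS : IsUnit (d * a⁻¹ - e * b⁻¹) := by
    rw [hSeq]; exact (hSchur.mul hbinv).neg
  -- extract the block equations from B * A = 1
  unfold blk3 at hBA
  rw [Matrix.fromBlocks_multiply, ← Matrix.fromBlocks_one, Matrix.fromBlocks_inj] at hBA
  obtain ⟨h1, h2, h3, h4⟩ := hBA
  rw [Matrix.fromCols_mul_fromRows] at h1
  -- h1 : x * a + (f * u + g * d) = 1
  rw [Matrix.mul_fromCols, Matrix.fromCols_mul_fromBlocks, fromColumns_add',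
    show (0 : Matrix (Fin n) (Fin n ⊕ Fin n) F) = fromCols 0 0 from
      (Matrix.fromCols_zero).symm,
    Matrix.fromCols_ext_iff] at h2
  obtain ⟨-, h2b⟩ := h2
  -- h2b : x * b + (f * v + g * e) = 0
  rw [Matrix.fromRows_mul, Matrix.fromBlocks_mul_fromRows, fromRows_add'_s13,
    show (0 : Matrix (Fin n ⊕ Fin n) (Fin n) F) = fromRows 0 0 from
      (Matrix.fromRows_zero).symm,
    Matrix.fromRows_ext_iff] at h3
  obtain ⟨-, h3b⟩ := h3
  -- h3b : j * a + (k * u + z * d) = 0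
  rw [Matrix.fromRows_mul_fromCols, Matrix.fromBlocks_multiply, Matrix.fromBlocks_add,
    ← Matrix.fromBlocks_one, Matrix.fromBlocks_inj] at h4
  obtain ⟨-, -, -, h4b⟩ := h4
  -- h4b : j * b + (k * v + z * e) = 1
  have hfu : f * u = 1 - x * a - g * d := by
    apply eq_of_sub_eq_zero; rw [← h1]; abel
  have hfv : f * v = -(x * b) - g * e := by
    apply eq_of_sub_eq_zero; rw [← h2b]; abel
  have hzd : z * d = -(j * a) - k * u := by
    apply eq_of_sub_eq_zero; rw [← h3b]; abel
  have hze : z * e = 1 - j * b - k * v := by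
    apply eq_of_sub_eq_zero; rw [← h4b]; abel
  have hu : u = f⁻¹ * (1 - x * a - g * d) := by
    rw [← hfu, ← Matrix.mul_assoc, hf1, one_mul]
  have hv : v = f⁻¹ * (-(x * b) - g * e) := by
    rw [← hfv, ← Matrix.mul_assoc, hf1, one_mul]
  have key : z * (d * a⁻¹ - e * b⁻¹) = qTilde a b d e f g k := by
    rw [qTilde, mul_sub, ← Matrix.mul_assoc, ← Matrix.mul_assoc, hzd, hze, hu, hv]
    simp only [sub_mul, add_mul, neg_mul, mul_sub, mul_add, mul_neg, mul_one, one_mul,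
      Matrix.mul_assoc, ha1, hb1]
    abel
  have hS1 : (d * a⁻¹ - e * b⁻¹) * (d * a⁻¹ - e * b⁻¹)⁻¹ = 1 :=
    Matrix.mul_nonsing_inv _ ((Matrix.isUnit_iff_isUnit_det _).mp hS)
  calc z = z * ((d * a⁻¹ - e * b⁻¹) * (d * a⁻¹ - e * b⁻¹)⁻¹) := by rw [hS1, mul_one]
    _ = z * (d * a⁻¹ - e * b⁻¹) * (d * a⁻¹ - e * b⁻¹)⁻¹ := by rw [Matrix.mul_assoc]
    _ = qTilde a b d e f g k * (d * a⁻¹ - e * b⁻¹)⁻¹ := by rw [key]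
end
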